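/- Let Y₁,…,Yₙ be i.i.d. with variance σ² > 0 and modified kurtosis κ̃, and let s²ₙ be the sample variance. For any α ∈ (0,1), with probability at least 1 − α one has s²ₙ < σ² · (1 + sqrt((κ̃ − (n−3)/(n−1)) · (1−α)/(α n))). -/

import Mathlib

open MeasureTheory ProbabilityTheory Finset

open scoped ENNReal
set_option maxHeartbeats 1000000
open MeasureTheory ProbabilityTheory Finset
open scoped ENNReal

section SVAux
variable {Ω : Type*} [MeasureSpace Ω] [IsProbabilityMeasure (ℙ : Measure Ω)]

lemma sv_memLp_mul {f g : Ω → ℝ} {p q r : ℝ≥0∞} (hf : MemLp f p ℙ) (hg : MemLp g q ℙ)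
    (h : 1/r = 1/p + 1/q) : MemLp (fun ω => f ω * g ω) r ℙ := by
  simpa [smul_eq_mul, Pi.mul_def] using MeasureTheory.MemLp.smul (φ := f) (f := g) hg hf
    (hpqr := ⟨by simpa [one_div] using h.symm⟩)

lemma sv_int_mul_L2 {f g : Ω → ℝ} (hf : MemLp f 2 ℙ) (hg : MemLp g 2 ℙ) :
    Integrable (fun ω => f ω * g ω) ℙ :=
  memLp_one_iff_integrable.mp <| sv_memLp_mul hf hg
    (by rw [ENNReal.div_add_div_same, ENNReal.div_eq_div_iff] <;> norm_num)

lemma sv_memLp_sq {f : Ω → ℝ} (hf : MemLp f 4 ℙ) : MemLp (fun ω => f ω ^ 2) 2 ℙ := by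
  have := sv_memLp_mul hf hf (r := 2)
    (by rw [ENNReal.div_add_div_same, ENNReal.div_eq_div_iff] <;> norm_num)
  simpa [pow_two] using this

lemma sv_int_pow {f : Ω → ℝ} (hf : MemLp f 4 ℙ) {k : ℕ} (hk : k ≤ 4) :
    Integrable (fun ω => f ω ^ k) ℙ := by
  have h4 : Integrable (fun ω => ‖f ω‖ ^ (4:ℝ)) ℙ :=
    hf.integrable_norm_rpow (by norm_num) (by norm_num)
  have hdom : Integrable (fun ω => 1 + |f ω| ^ (4:ℕ)) ℙ := by
    refine (integrable_const 1).add ?_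
    refine h4.congr (Filter.Eventually.of_forall fun ω => ?_)
    show ‖f ω‖ ^ (4:ℝ) = |f ω| ^ 4
    rw [Real.norm_eq_abs, ← Real.rpow_natCast]
    norm_num
  refine Integrable.mono' hdom (hf.aestronglyMeasurable.pow k) ?_
  · filter_upwards with ω
    rw [norm_pow, Real.norm_eq_abs]
    rcases le_or_gt (|f ω|) 1 with h | h
    · have : |f ω| ^ k ≤ 1 := pow_le_one₀ (abs_nonneg _) h
      nlinarith [pow_nonneg (abs_nonneg (f ω)) 4]
    · have : |f ω| ^ k ≤ |f ω| ^ 4 := pow_le_pow_right₀ h.le hk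
      linarith

lemma sv_indep_step {n : ℕ} {Z : Fin n → Ω → ℝ}
    (hindep : iIndepFun Z ℙ) (hmeas : ∀ i, Measurable (Z i))
    {s : Finset (Fin n)} {i : Fin n} (hi : i ∉ s) (k a b : ℕ) :
    IndepFun (fun ω => (Z i ω)^k)
      (fun ω => (∑ j ∈ s, (Z j ω)^2)^a * (∑ j ∈ s, Z j ω)^b) ℙ := by
  have base := hindep.indepFun_finset {i} s (Finset.disjoint_singleton_left.mpr hi) hmeas
  have hφ : Measurable (fun v : (({i}:Finset (Fin n)) → ℝ) =>
      (v ⟨i, Finset.mem_singleton_self i⟩)^k) := (measurable_pi_apply _).pow_const k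
  have hψ : Measurable (fun v : ↥s → ℝ =>
      (∑ j, (v j)^2)^a * (∑ j, v j)^b) := by fun_prop
  have h := base.comp hφ hψ
  have e1 : (fun v : ↥s → ℝ => (∑ j, (v j)^2)^a * (∑ j, v j)^b) ∘
      (fun ω (j : s) => Z j ω)
      = fun ω => (∑ j ∈ s, (Z j ω)^2)^a * (∑ j ∈ s, Z j ω)^b := by
    funext ω
    simp only [Function.comp_apply]
    rw [← Finset.sum_attach s (fun j => (Z j ω)^2), ← Finset.sum_attach s (fun j => Z j ω)]
    rfl
  rwa [e1] at h

end SVAux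

section Moments
variable {Ω : Type*} [MeasureSpace Ω] [IsProbabilityMeasure (ℙ : Measure Ω)]

lemma sv_add2 {f1 f2 : Ω → ℝ} (h1 : Integrable f1 ℙ) (h2 : Integrable f2 ℙ) :
    ∫ ω, (f1 ω + f2 ω) ∂ℙ = (∫ ω, f1 ω ∂ℙ) + ∫ ω, f2 ω ∂ℙ := integral_add h1 h2

lemma sv_add3 {f1 f2 f3 : Ω → ℝ} (h1 : Integrable f1 ℙ) (h2 : Integrable f2 ℙ)
    (h3 : Integrable f3 ℙ) :
    ∫ ω, (f1 ω + (f2 ω + f3 ω)) ∂ℙ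
      = (∫ ω, f1 ω ∂ℙ) + ((∫ ω, f2 ω ∂ℙ) + ∫ ω, f3 ω ∂ℙ) := by
  have h := sv_add2 h1 (h2.add h3)
  simp only [Pi.add_apply] at h
  rw [h, sv_add2 h2 h3]

lemma sv_add4 {f1 f2 f3 f4 : Ω → ℝ} (h1 : Integrable f1 ℙ) (h2 : Integrable f2 ℙ)
    (h3 : Integrable f3 ℙ) (h4 : Integrable f4 ℙ) :
    ∫ ω, (f1 ω + (f2 ω + (f3 ω + f4 ω))) ∂ℙ
      = (∫ ω, f1 ω ∂ℙ) + ((∫ ω, f2 ω ∂ℙ) + ((∫ ω, f3 ω ∂ℙ) + ∫ ω, f4 ω ∂ℙ)) := by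
  have h := sv_add2 h1 (h2.add (h3.add h4))
  simp only [Pi.add_apply] at h
  rw [h, sv_add3 h2 h3 h4]

lemma sv_add5 {f1 f2 f3 f4 f5 : Ω → ℝ} (h1 : Integrable f1 ℙ) (h2 : Integrable f2 ℙ)
    (h3 : Integrable f3 ℙ) (h4 : Integrable f4 ℙ) (h5 : Integrable f5 ℙ) :
    ∫ ω, (f1 ω + (f2 ω + (f3 ω + (f4 ω + f5 ω)))) ∂ℙ
      = (∫ ω, f1 ω ∂ℙ) + ((∫ ω, f2 ω ∂ℙ) + ((∫ ω, f3 ω ∂ℙ)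
          + ((∫ ω, f4 ω ∂ℙ) + ∫ ω, f5 ω ∂ℙ))) := by
  have h := sv_add2 h1 (h2.add (h3.add (h4.add h5)))
  simp only [Pi.add_apply] at h
  rw [h, sv_add4 h2 h3 h4 h5]

lemma sv_add6 {f1 f2 f3 f4 f5 f6 : Ω → ℝ} (h1 : Integrable f1 ℙ) (h2 : Integrable f2 ℙ)
    (h3 : Integrable f3 ℙ) (h4 : Integrable f4 ℙ) (h5 : Integrable f5 ℙ)
    (h6 : Integrable f6 ℙ) :
    ∫ ω, (f1 ω + (f2 ω + (f3 ω + (f4 ω + (f5 ω + f6 ω))))) ∂ℙ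
      = (∫ ω, f1 ω ∂ℙ) + ((∫ ω, f2 ω ∂ℙ) + ((∫ ω, f3 ω ∂ℙ)
          + ((∫ ω, f4 ω ∂ℙ) + ((∫ ω, f5 ω ∂ℙ) + ∫ ω, f6 ω ∂ℙ)))) := by
  have h := sv_add2 h1 (h2.add (h3.add (h4.add (h5.add h6))))
  simp only [Pi.add_apply] at h
  rw [h, sv_add5 h2 h3 h4 h5 h6]


lemma sv_moments {n : ℕ} {Z : Fin n → Ω → ℝ}
    (hindep : iIndepFun Z ℙ) (hmeas : ∀ i, Measurable (Z i))
    (hmem : ∀ i, MemLp (Z i) 4 ℙ) {m2 m3 m4 : ℝ}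
    (h1 : ∀ i, ∫ ω, Z i ω ∂ℙ = 0) (h2 : ∀ i, ∫ ω, (Z i ω)^2 ∂ℙ = m2)
    (h3 : ∀ i, ∫ ω, (Z i ω)^3 ∂ℙ = m3) (h4 : ∀ i, ∫ ω, (Z i ω)^4 ∂ℙ = m4)
    (s : Finset (Fin n)) :
    (∫ ω, (∑ j ∈ s, Z j ω) ∂ℙ = 0) ∧
    (∫ ω, (∑ j ∈ s, Z j ω)^2 ∂ℙ = s.card * m2) ∧
    (∫ ω, (∑ j ∈ s, Z j ω)^3 ∂ℙ = s.card * m3) ∧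
    (∫ ω, (∑ j ∈ s, Z j ω)^4 ∂ℙ
        = s.card * m4 + 3*s.card*(s.card - 1)*m2^2) ∧
    (∫ ω, (∑ j ∈ s, (Z j ω)^2) ∂ℙ = s.card * m2) ∧
    (∫ ω, (∑ j ∈ s, (Z j ω)^2) * (∑ j ∈ s, Z j ω) ∂ℙ = s.card * m3) ∧
    (∫ ω, (∑ j ∈ s, (Z j ω)^2) * (∑ j ∈ s, Z j ω)^2 ∂ℙ
        = s.card * m4 + s.card*(s.card-1)*m2^2) ∧
    (∫ ω, (∑ j ∈ s, (Z j ω)^2)^2 ∂ℙ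
        = s.card * m4 + s.card*(s.card-1)*m2^2) := by
  classical
  induction s using Finset.induction_on with
  | empty => refine ⟨?_, ?_, ?_, ?_, ?_, ?_, ?_, ?_⟩ <;> simp
  | @insert i s hi IH =>
    obtain ⟨P1, P2, P3, P4, P5, P6, P7, P8⟩ := IH
    have hWmeas : Measurable (fun ω => ∑ j ∈ s, Z j ω) :=
      Finset.measurable_sum s (fun j _ => hmeas j)
    have hS2meas : Measurable (fun ω => ∑ j ∈ s, (Z j ω)^2) :=
      Finset.measurable_sum s (fun j _ => (hmeas j).pow_const 2)
    have hWmem : MemLp (fun ω => ∑ j ∈ s, Z j ω) 4 ℙ :=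
      memLp_finset_sum s (fun j _ => hmem j)
    have hS2mem : MemLp (fun ω => ∑ j ∈ s, (Z j ω)^2) 2 ℙ :=
      memLp_finset_sum s (fun j _ => sv_memLp_sq (hmem j))
    have hWL2 : MemLp (fun ω => ∑ j ∈ s, Z j ω) 2 ℙ :=
      hWmem.mono_exponent (by norm_num)
    have hW2mem : MemLp (fun ω => (∑ j ∈ s, Z j ω)^2) 2 ℙ := sv_memLp_sq hWmem
    have intW : Integrable (fun ω => ∑ j ∈ s, Z j ω) ℙ := hWL2.integrable (by norm_num)
    have intW2 : Integrable (fun ω => (∑ j ∈ s, Z j ω)^2) ℙ := sv_int_pow hWmem (by norm_num)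
    have intW3 : Integrable (fun ω => (∑ j ∈ s, Z j ω)^3) ℙ := sv_int_pow hWmem (by norm_num)
    have intW4 : Integrable (fun ω => (∑ j ∈ s, Z j ω)^4) ℙ := sv_int_pow hWmem (by norm_num)
    have intS2 : Integrable (fun ω => ∑ j ∈ s, (Z j ω)^2) ℙ := hS2mem.integrable (by norm_num)
    have intS2W : Integrable (fun ω => (∑ j ∈ s, (Z j ω)^2) * (∑ j ∈ s, Z j ω)) ℙ :=
      sv_int_mul_L2 hS2mem hWL2
    have intS2W2 : Integrable (fun ω => (∑ j ∈ s, (Z j ω)^2) * (∑ j ∈ s, Z j ω)^2) ℙ :=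
      sv_int_mul_L2 hS2mem hW2mem
    have intS2sq : Integrable (fun ω => (∑ j ∈ s, (Z j ω)^2)^2) ℙ := by
      simpa [pow_two] using sv_int_mul_L2 hS2mem hS2mem
    have hintZ : ∀ k, k ≤ 4 → Integrable (fun ω => (Z i ω)^k) ℙ :=
      fun k hk => sv_int_pow (hmem i) hk
    have intZ1 : Integrable (Z i) ℙ := by simpa using hintZ 1 (by norm_num)
    have hval : ∀ k a b : ℕ,
        ∫ ω, (Z i ω)^k * ((∑ j ∈ s, (Z j ω)^2)^a * (∑ j ∈ s, Z j ω)^b) ∂ℙ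
          = (∫ ω, (Z i ω)^k ∂ℙ)
            * ∫ ω, (∑ j ∈ s, (Z j ω)^2)^a * (∑ j ∈ s, Z j ω)^b ∂ℙ := fun k a b =>
      (sv_indep_step hindep hmeas hi k a b).integral_fun_mul_eq_mul_integral
        ((hmeas i).pow_const k).aestronglyMeasurable
        ((hS2meas.pow_const a).mul (hWmeas.pow_const b)).aestronglyMeasurable
    have hterm : ∀ k a b : ℕ, k ≤ 4 →
        Integrable (fun ω => (∑ j ∈ s, (Z j ω)^2)^a * (∑ j ∈ s, Z j ω)^b) ℙ →
        Integrable (fun ω => (Z i ω)^k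
          * ((∑ j ∈ s, (Z j ω)^2)^a * (∑ j ∈ s, Z j ω)^b)) ℙ := fun k a b hk hY =>
      (sv_indep_step hindep hmeas hi k a b).integrable_mul (hintZ k hk) hY
    -- pretty values
    have J1W : ∫ ω, Z i ω * (∑ j ∈ s, Z j ω) ∂ℙ = 0 := by
      have h := hval 1 0 1; simp only [pow_zero, pow_one, one_mul] at h
      rw [h, h1 i, zero_mul]
    have J2W : ∫ ω, (Z i ω)^2 * (∑ j ∈ s, Z j ω) ∂ℙ = 0 := by
      have h := hval 2 0 1; simp only [pow_zero, pow_one, one_mul] at h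
      rw [h, P1, mul_zero]
    have J3W : ∫ ω, (Z i ω)^3 * (∑ j ∈ s, Z j ω) ∂ℙ = 0 := by
      have h := hval 3 0 1; simp only [pow_zero, pow_one, one_mul] at h
      rw [h, P1, mul_zero]
    have J1W2 : ∫ ω, Z i ω * (∑ j ∈ s, Z j ω)^2 ∂ℙ = 0 := by
      have h := hval 1 0 2; simp only [pow_zero, pow_one, one_mul] at h
      rw [h, h1 i, zero_mul]
    have J2W2 : ∫ ω, (Z i ω)^2 * (∑ j ∈ s, Z j ω)^2 ∂ℙ = m2 * (s.card * m2) := by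
      have h := hval 2 0 2; simp only [pow_zero, pow_one, one_mul] at h
      rw [h, h2 i, P2]
    have J1W3 : ∫ ω, Z i ω * (∑ j ∈ s, Z j ω)^3 ∂ℙ = 0 := by
      have h := hval 1 0 3; simp only [pow_zero, pow_one, one_mul] at h
      rw [h, h1 i, zero_mul]
    have J1S2 : ∫ ω, Z i ω * (∑ j ∈ s, (Z j ω)^2) ∂ℙ = 0 := by
      have h := hval 1 1 0; simp only [pow_zero, pow_one, one_mul, mul_one] at h
      rw [h, h1 i, zero_mul]
    have J2S2 : ∫ ω, (Z i ω)^2 * (∑ j ∈ s, (Z j ω)^2) ∂ℙ = m2 * (s.card * m2) := by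
      have h := hval 2 1 0; simp only [pow_zero, pow_one, one_mul, mul_one] at h
      rw [h, h2 i, P5]
    have J1S2W : ∫ ω, Z i ω * ((∑ j ∈ s, (Z j ω)^2) * (∑ j ∈ s, Z j ω)) ∂ℙ = 0 := by
      have h := hval 1 1 1; simp only [pow_zero, pow_one, one_mul] at h
      rw [h, h1 i, zero_mul]
    -- integrable terms
    have T11 : Integrable (fun ω => Z i ω * (∑ j ∈ s, Z j ω)) ℙ := by
      have h := hterm 1 0 1 (by norm_num) (by simpa using intW); simpa using h
    have T21 : Integrable (fun ω => (Z i ω)^2 * (∑ j ∈ s, Z j ω)) ℙ := by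
      have h := hterm 2 0 1 (by norm_num) (by simpa using intW); simpa using h
    have T31 : Integrable (fun ω => (Z i ω)^3 * (∑ j ∈ s, Z j ω)) ℙ := by
      have h := hterm 3 0 1 (by norm_num) (by simpa using intW); simpa using h
    have T12 : Integrable (fun ω => Z i ω * (∑ j ∈ s, Z j ω)^2) ℙ := by
      have h := hterm 1 0 2 (by norm_num) (by simpa using intW2); simpa using h
    have T22 : Integrable (fun ω => (Z i ω)^2 * (∑ j ∈ s, Z j ω)^2) ℙ := by
      have h := hterm 2 0 2 (by norm_num) (by simpa using intW2); simpa using h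
    have T13 : Integrable (fun ω => Z i ω * (∑ j ∈ s, Z j ω)^3) ℙ := by
      have h := hterm 1 0 3 (by norm_num) (by simpa using intW3); simpa using h
    have T1S2 : Integrable (fun ω => Z i ω * (∑ j ∈ s, (Z j ω)^2)) ℙ := by
      have h := hterm 1 1 0 (by norm_num) (by simpa using intS2); simpa using h
    have T2S2 : Integrable (fun ω => (Z i ω)^2 * (∑ j ∈ s, (Z j ω)^2)) ℙ := by
      have h := hterm 2 1 0 (by norm_num) (by simpa using intS2); simpa using h
    have T1S2W : Integrable (fun ω => Z i ω * ((∑ j ∈ s, (Z j ω)^2) * (∑ j ∈ s, Z j ω))) ℙ := by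
      have h := hterm 1 1 1 (by norm_num) (by simpa using intS2W); simpa using h
    refine ⟨?_, ?_, ?_, ?_, ?_, ?_, ?_, ?_⟩
    · -- P1'
      simp only [Finset.sum_insert hi]
      rw [sv_add2 intZ1 intW, h1 i, P1]; norm_num
    · -- P2'
      simp only [Finset.sum_insert hi, Finset.card_insert_of_notMem hi]
      have e : (fun ω => (Z i ω + ∑ j ∈ s, Z j ω)^2)
          = fun ω => (Z i ω)^2 + (2*(Z i ω * (∑ j ∈ s, Z j ω)) + (∑ j ∈ s, Z j ω)^2) :=
        funext fun ω => by ring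
      have B : Integrable (fun ω => 2*(Z i ω * (∑ j ∈ s, Z j ω))) ℙ := T11.const_mul 2
      rw [e, sv_add3 (hintZ 2 (by norm_num)) B intW2, integral_const_mul, h2 i, J1W, P2]
      push_cast; ring
    · -- P3'
      simp only [Finset.sum_insert hi, Finset.card_insert_of_notMem hi]
      have e : (fun ω => (Z i ω + ∑ j ∈ s, Z j ω)^3)
          = fun ω => (Z i ω)^3 + (3*((Z i ω)^2 * (∑ j ∈ s, Z j ω))
            + (3*(Z i ω * (∑ j ∈ s, Z j ω)^2) + (∑ j ∈ s, Z j ω)^3)) :=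
        funext fun ω => by ring
      have B : Integrable (fun ω => 3*((Z i ω)^2 * (∑ j ∈ s, Z j ω))) ℙ := T21.const_mul 3
      have C : Integrable (fun ω => 3*(Z i ω * (∑ j ∈ s, Z j ω)^2)) ℙ := T12.const_mul 3
      rw [e, sv_add4 (hintZ 3 (by norm_num)) B C intW3, integral_const_mul,
        integral_const_mul, h3 i, J2W, J1W2, P3]
      push_cast; ring
    · -- P4'
      simp only [Finset.sum_insert hi, Finset.card_insert_of_notMem hi]
      have e : (fun ω => (Z i ω + ∑ j ∈ s, Z j ω)^4)
          = fun ω => (Z i ω)^4 + (4*((Z i ω)^3 * (∑ j ∈ s, Z j ω))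
            + (6*((Z i ω)^2 * (∑ j ∈ s, Z j ω)^2)
            + (4*(Z i ω * (∑ j ∈ s, Z j ω)^3) + (∑ j ∈ s, Z j ω)^4))) :=
        funext fun ω => by ring
      have B : Integrable (fun ω => 4*((Z i ω)^3 * (∑ j ∈ s, Z j ω))) ℙ := T31.const_mul 4
      have C : Integrable (fun ω => 6*((Z i ω)^2 * (∑ j ∈ s, Z j ω)^2)) ℙ := T22.const_mul 6
      have D : Integrable (fun ω => 4*(Z i ω * (∑ j ∈ s, Z j ω)^3)) ℙ := T13.const_mul 4
      rw [e, sv_add5 (hintZ 4 (by norm_num)) B C D intW4, integral_const_mul,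
        integral_const_mul, integral_const_mul, h4 i, J3W, J2W2, J1W3, P4]
      push_cast; ring
    · -- P5'
      simp only [Finset.sum_insert hi, Finset.card_insert_of_notMem hi]
      rw [sv_add2 (hintZ 2 (by norm_num)) intS2, h2 i, P5]
      push_cast; ring
    · -- P6'
      simp only [Finset.sum_insert hi, Finset.card_insert_of_notMem hi]
      have e : (fun ω => ((Z i ω)^2 + ∑ j ∈ s, (Z j ω)^2) * (Z i ω + ∑ j ∈ s, Z j ω))
          = fun ω => (Z i ω)^3 + ((Z i ω)^2 * (∑ j ∈ s, Z j ω)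
            + (Z i ω * (∑ j ∈ s, (Z j ω)^2)
            + (∑ j ∈ s, (Z j ω)^2) * (∑ j ∈ s, Z j ω))) :=
        funext fun ω => by ring
      rw [e, sv_add4 (hintZ 3 (by norm_num)) T21 T1S2 intS2W, h3 i, J2W, J1S2, P6]
      push_cast; ring
    · -- P7'
      simp only [Finset.sum_insert hi, Finset.card_insert_of_notMem hi]
      have e : (fun ω => ((Z i ω)^2 + ∑ j ∈ s, (Z j ω)^2) * (Z i ω + ∑ j ∈ s, Z j ω)^2)
          = fun ω => (Z i ω)^4 + (2*((Z i ω)^3 * (∑ j ∈ s, Z j ω))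
            + ((Z i ω)^2 * (∑ j ∈ s, Z j ω)^2
            + ((Z i ω)^2 * (∑ j ∈ s, (Z j ω)^2)
            + (2*(Z i ω * ((∑ j ∈ s, (Z j ω)^2) * (∑ j ∈ s, Z j ω)))
            + (∑ j ∈ s, (Z j ω)^2) * (∑ j ∈ s, Z j ω)^2)))) :=
        funext fun ω => by ring
      have B : Integrable (fun ω => 2*((Z i ω)^3 * (∑ j ∈ s, Z j ω))) ℙ := T31.const_mul 2
      have E : Integrable
          (fun ω => 2*(Z i ω * ((∑ j ∈ s, (Z j ω)^2) * (∑ j ∈ s, Z j ω)))) ℙ :=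
        T1S2W.const_mul 2
      rw [e, sv_add6 (hintZ 4 (by norm_num)) B T22 T2S2 E intS2W2, integral_const_mul,
        integral_const_mul, h4 i, J3W, J2W2, J2S2, J1S2W, P7]
      push_cast; ring
    · -- P8'
      simp only [Finset.sum_insert hi, Finset.card_insert_of_notMem hi]
      have e : (fun ω => ((Z i ω)^2 + ∑ j ∈ s, (Z j ω)^2)^2)
          = fun ω => (Z i ω)^4 + (2*((Z i ω)^2 * (∑ j ∈ s, (Z j ω)^2))
            + (∑ j ∈ s, (Z j ω)^2)^2) :=
        funext fun ω => by ring
      have B : Integrable (fun ω => 2*((Z i ω)^2 * (∑ j ∈ s, (Z j ω)^2))) ℙ := T2S2.const_mul 2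
      rw [e, sv_add3 (hintZ 4 (by norm_num)) B intS2sq, integral_const_mul, h4 i, J2S2, P8]
      push_cast; ring

end Moments

section Cantelli
variable {Ω : Type*} [MeasureSpace Ω] [IsProbabilityMeasure (ℙ : Measure Ω)]

lemma sv_cantelli {X : Ω → ℝ} (hX : MemLp X 2 ℙ) {t : ℝ} (ht : 0 < t) :
    ℙ {ω | (∫ x, X x ∂ℙ) + t ≤ X ω}
      ≤ ENNReal.ofReal (variance X ℙ / (variance X ℙ + t^2)) := by
  set μ0 := ∫ x, X x ∂ℙ with hμ0
  set v := variance X ℙ with hv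
  have hv0 : 0 ≤ v := variance_nonneg _ _
  set u := v/t with hu
  have hu0 : 0 ≤ u := div_nonneg hv0 ht.le
  have hXint : Integrable X ℙ := hX.integrable (by norm_num)
  have hXc : MemLp (fun ω => X ω - μ0) 2 ℙ := hX.sub (memLp_const μ0)
  have h2int : Integrable (fun ω => (X ω - μ0)^2) ℙ := by
    simpa [pow_two] using sv_int_mul_L2 hXc hXc
  have hlin : Integrable (fun ω => (2*u)*(X ω - μ0)) ℙ :=
    ((hXint.sub (integrable_const μ0)).const_mul (2*u))
  have hg : Integrable (fun ω => (X ω - μ0 + u)^2) ℙ := by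
    have hmm : MemLp (fun ω => X ω - μ0 + u) 2 ℙ := hXc.add (memLp_const u)
    simpa [pow_two] using sv_int_mul_L2 hmm hmm
  have hvar : v = ∫ ω, (X ω - μ0)^2 ∂ℙ := by
    rw [hv, variance_eq_integral hX.aemeasurable]
  have hmean : ∫ ω, (X ω - μ0) ∂ℙ = 0 := by
    rw [integral_sub hXint (integrable_const _), integral_const]
    simp [hμ0]
  have hEg : ∫ ω, (X ω - μ0 + u)^2 ∂ℙ = v + u^2 := by
    have e : (fun ω => (X ω - μ0 + u)^2)
        = fun ω => (X ω - μ0)^2 + ((2*u)*(X ω - μ0) + u^2) := funext fun ω => by ring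
    rw [e, sv_add3 h2int hlin (integrable_const _), integral_const_mul, hmean,
      integral_const, ← hvar]
    simp
  have hsub : {ω | μ0 + t ≤ X ω} ⊆ {x | (t+u)^2 ≤ (X x - μ0 + u)^2} := by
    intro ω hω
    have h1 : t + u ≤ X ω - μ0 + u := by
      have : μ0 + t ≤ X ω := hω
      linarith
    exact pow_le_pow_left₀ (by positivity) h1 2
  have hmarkov := mul_meas_ge_le_integral_of_nonneg (μ := ℙ)
    (f := fun ω => (X ω - μ0 + u)^2)
    (Filter.Eventually.of_forall fun ω => sq_nonneg _) hg ((t+u)^2)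
  rw [hEg] at hmarkov
  have hmono : (ℙ {ω | μ0 + t ≤ X ω}).toReal
      ≤ (ℙ {x | (t+u)^2 ≤ (X x - μ0 + u)^2}).toReal :=
    ENNReal.toReal_mono (measure_ne_top _ _) (measure_mono hsub)
  have htu : (0:ℝ) < (t+u)^2 := by positivity
  have h2 : (ℙ {ω | μ0 + t ≤ X ω}).toReal ≤ (v + u^2)/((t+u)^2) := by
    rw [le_div_iff₀ htu]
    simp only [measureReal_def] at hmarkov
    nlinarith [hmono, hmarkov]
  have hvt : (0:ℝ) < v + t^2 := by positivity
  have heq : (v + u^2)/((t+u)^2) = v/(v + t^2) := by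
    rw [hu]
    field_simp
    ring
  rw [heq] at h2
  exact (ENNReal.le_ofReal_iff_toReal_le (measure_ne_top _ _)
    (div_nonneg hv0 hvt.le)).mpr h2

end Cantelli

section AECongr
variable {Ω : Type*} [MeasureSpace Ω] [IsProbabilityMeasure (ℙ : Measure Ω)]

lemma sv_iIndepFun_congr {ι : Type*} {f g : ι → Ω → ℝ}
    (h : iIndepFun f ℙ) (hfg : ∀ i, f i =ᵐ[ℙ] g i) :
    iIndepFun g ℙ := by
  rw [iIndepFun_iff_measure_inter_preimage_eq_mul] at h ⊢
  intro S sets hsets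
  have hae : ∀ᵐ ω ∂ℙ, ∀ i ∈ S, f i ω = g i ω :=
    (ae_ball_iff S.countable_toSet).mpr fun i _ => hfg i
  have hinter : (⋂ i ∈ S, f i ⁻¹' sets i : Set Ω) =ᵐ[ℙ] ⋂ i ∈ S, g i ⁻¹' sets i := by
    filter_upwards [hae] with ω hω
    show (ω ∈ ⋂ i ∈ S, f i ⁻¹' sets i) = (ω ∈ ⋂ i ∈ S, g i ⁻¹' sets i)
    simp only [eq_iff_iff, Set.mem_iInter, Set.mem_preimage]
    exact ⟨fun hmem i hi => by rw [← hω i hi]; exact hmem i hi,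
      fun hmem i hi => by rw [hω i hi]; exact hmem i hi⟩
  calc ℙ (⋂ i ∈ S, g i ⁻¹' sets i) = ℙ (⋂ i ∈ S, f i ⁻¹' sets i) :=
        (measure_congr hinter.symm)
    _ = ∏ i ∈ S, ℙ (f i ⁻¹' sets i) := h S hsets
    _ = ∏ i ∈ S, ℙ (g i ⁻¹' sets i) :=
        Finset.prod_congr rfl fun i _ => measure_congr ((hfg i).fun_comp (· ∈ sets i))

end AECongr


/-- Upper-deviation bound for the sample variance: for i.i.d. `Y 0, …, Y (n-1)` (`n ≥ 2`),
each distributed as `Y₀` with variance `σ² > 0` and modified kurtosis `κ̃`, and any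
`α ∈ (0,1)`, with probability at least `1 - α`,
`s²ₙ < σ² (1 + √((κ̃ - (n-3)/(n-1)) (1-α)/(α n)))`. -/
theorem sample_variance_upper_deviation
    {Ω : Type*} [MeasureSpace Ω] [IsProbabilityMeasure (ℙ : Measure Ω)]
    (n : ℕ) (hn : 2 ≤ n) (Y₀ : Ω → ℝ) (Y : Fin n → Ω → ℝ)
    (hindep : iIndepFun Y ℙ)
    (hident : ∀ i, IdentDistrib (Y i) Y₀ ℙ ℙ)
    (hmem : MemLp Y₀ 4 ℙ)
    (σsq κtilde : ℝ) (hσ : σsq = variance Y₀ ℙ) (hσpos : 0 < σsq)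
    (hκ : κtilde = (∫ ω, (Y₀ ω - ∫ ω', Y₀ ω' ∂ℙ) ^ 4 ∂ℙ) / σsq ^ 2)
    (α : ℝ) (hα : α ∈ Set.Ioo (0 : ℝ) 1) :
    ENNReal.ofReal (1 - α) ≤
      ℙ {ω | (1 / ((n : ℝ) - 1)) * ∑ i, (Y i ω - (1 / (n : ℝ)) * ∑ j, Y j ω) ^ 2
          < σsq * (1 + Real.sqrt ((κtilde - ((n : ℝ) - 3) / ((n : ℝ) - 1))
              * ((1 - α) / (α * n)))) } := by
  obtain ⟨hα0, hα1⟩ := hα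
  have hn2 : (2:ℝ) ≤ (n:ℝ) := by exact_mod_cast hn
  have hnpos : (0:ℝ) < n := by linarith
  have hn0 : (n:ℝ) ≠ 0 := ne_of_gt hnpos
  have hn1 : (0:ℝ) < (n:ℝ) - 1 := by linarith
  have hn1' : (n:ℝ) - 1 ≠ 0 := ne_of_gt hn1
  -- measurable modifications
  have haem : ∀ i, AEMeasurable (Y i) ℙ := fun i => (hident i).aemeasurable_fst
  set Y' : Fin n → Ω → ℝ := fun i => (haem i).mk (Y i) with hY'def
  have hmeas' : ∀ i, Measurable (Y' i) := fun i => (haem i).measurable_mk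
  have haeeq : ∀ i, Y i =ᵐ[ℙ] Y' i := fun i => (haem i).ae_eq_mk
  have hindep' : iIndepFun Y' ℙ := sv_iIndepFun_congr hindep haeeq
  have hident' : ∀ i, IdentDistrib (Y' i) Y₀ ℙ ℙ := fun i =>
    ((IdentDistrib.of_ae_eq (haem i) (haeeq i)).symm.trans (hident i))
  -- centered variables
  set μ0 := ∫ ω, Y₀ ω ∂ℙ with hμ0def
  set Z : Fin n → Ω → ℝ := fun i ω => Y' i ω - μ0 with hZdef
  have hZmeas : ∀ i, Measurable (Z i) := fun i => (hmeas' i).sub measurable_const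
  have hZindep : iIndepFun Z ℙ :=
    hindep'.comp (fun _ x => x - μ0) (fun _ => measurable_id.sub measurable_const)
  have hidZ : ∀ i, IdentDistrib (Z i) (fun ω => Y₀ ω - μ0) ℙ ℙ := fun i =>
    (hident' i).comp (measurable_id.sub measurable_const)
  have hmemZ₀ : MemLp (fun ω => Y₀ ω - μ0) 4 ℙ := hmem.sub (memLp_const μ0)
  have hmemZ : ∀ i, MemLp (Z i) 4 ℙ := fun i => (hidZ i).symm.memLp_snd hmemZ₀
  have hY₀int : Integrable Y₀ ℙ := hmem.integrable (by norm_num)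
  have hint₀ : ∀ k : ℕ, k ≤ 4 → Integrable (fun ω => (Y₀ ω - μ0) ^ k) ℙ :=
    fun k hk => sv_int_pow hmemZ₀ hk
  have hmom : ∀ i, ∀ k : ℕ, ∫ ω, (Z i ω)^k ∂ℙ = ∫ ω, (Y₀ ω - μ0)^k ∂ℙ :=
    fun i k => ((hidZ i).comp (measurable_id.pow_const k)).integral_eq
  -- basic moment identities
  have hm1 : ∫ ω, (Y₀ ω - μ0) ∂ℙ = 0 := by
    rw [integral_sub hY₀int (integrable_const _), integral_const]
    simp [hμ0def]
  have hmem2 : MemLp Y₀ 2 ℙ := hmem.mono_exponent (by norm_num)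
  have hvar_eq : σsq = ∫ ω, (Y₀ ω - μ0)^2 ∂ℙ := by
    rw [hσ, variance_eq_integral hmem2.aemeasurable]
  have hσ2pos : (0:ℝ) < σsq^2 := by positivity
  have hm4_eq : ∫ ω, (Y₀ ω - μ0)^4 ∂ℙ = κtilde * σsq^2 := by
    rw [hκ]; field_simp
  -- kurtosis at least 1
  have hkur : σsq^2 ≤ κtilde * σsq^2 := by
    have hnn : 0 ≤ ∫ ω, ((Y₀ ω - μ0)^2 - σsq)^2 ∂ℙ :=
      integral_nonneg fun ω => sq_nonneg _
    have e : (fun ω => ((Y₀ ω - μ0)^2 - σsq)^2)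
        = fun ω => (Y₀ ω - μ0)^4 + ((-(2*σsq))*((Y₀ ω - μ0)^2) + σsq^2) :=
      funext fun ω => by ring
    have hexp : ∫ ω, ((Y₀ ω - μ0)^2 - σsq)^2 ∂ℙ = κtilde * σsq^2 - σsq^2 := by
      rw [e, sv_add3 (hint₀ 4 (by norm_num))
          ((hint₀ 2 (by norm_num)).const_mul _) (integrable_const _),
        integral_const_mul, integral_const, hm4_eq, ← hvar_eq]
      simp
      ring
    linarith [hexp ▸ hnn]
  have hκ1 : 1 ≤ κtilde := by nlinarith
  have hc : 0 < κtilde - ((n:ℝ) - 3)/((n:ℝ) - 1) := by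
    have : ((n:ℝ) - 3)/((n:ℝ) - 1) < 1 := (div_lt_one hn1).mpr (by linarith)
    linarith
  -- moments of the centered sample
  have h1 : ∀ i, ∫ ω, Z i ω ∂ℙ = 0 := fun i => by
    have := (hidZ i).integral_eq; rw [this, hm1]
  have h2 : ∀ i, ∫ ω, (Z i ω)^2 ∂ℙ = σsq := fun i => by rw [hmom i 2, ← hvar_eq]
  have h3 : ∀ i, ∫ ω, (Z i ω)^3 ∂ℙ = ∫ ω, (Y₀ ω - μ0)^3 ∂ℙ := fun i => hmom i 3
  have h4 : ∀ i, ∫ ω, (Z i ω)^4 ∂ℙ = κtilde * σsq^2 := fun i => by rw [hmom i 4, hm4_eq]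
  obtain ⟨Q1, Q2, Q3, Q4, Q5, Q6, Q7, Q8⟩ :=
    sv_moments hZindep hZmeas hmemZ h1 h2 h3 h4 Finset.univ
  simp only [Finset.card_univ, Fintype.card_fin] at Q1 Q2 Q3 Q4 Q5 Q6 Q7 Q8
  -- the sample variance (centered representation)
  set V : Ω → ℝ := fun ω =>
    (1/((n:ℝ) - 1)) * ((∑ i, (Z i ω)^2) - (∑ i, Z i ω)^2/(n:ℝ)) with hVdef
  -- membership / integrability kit at univ
  have hWmem4 : MemLp (fun ω => ∑ i, Z i ω) 4 ℙ :=
    memLp_finset_sum Finset.univ (fun j _ => hmemZ j)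
  have hS2mem : MemLp (fun ω => ∑ i, (Z i ω)^2) 2 ℙ :=
    memLp_finset_sum Finset.univ (fun j _ => sv_memLp_sq (hmemZ j))
  have hW2mem : MemLp (fun ω => (∑ i, Z i ω)^2) 2 ℙ := sv_memLp_sq hWmem4
  have intS2 : Integrable (fun ω => ∑ i, (Z i ω)^2) ℙ := hS2mem.integrable (by norm_num)
  have intW2 : Integrable (fun ω => (∑ i, Z i ω)^2) ℙ := sv_int_pow hWmem4 (by norm_num)
  have intW4 : Integrable (fun ω => (∑ i, Z i ω)^4) ℙ := sv_int_pow hWmem4 (by norm_num)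
  have intS2W2 : Integrable (fun ω => (∑ i, (Z i ω)^2) * (∑ i, Z i ω)^2) ℙ :=
    sv_int_mul_L2 hS2mem hW2mem
  have intS2sq : Integrable (fun ω => (∑ i, (Z i ω)^2)^2) ℙ := by
    simpa [pow_two] using sv_int_mul_L2 hS2mem hS2mem
  have hVmem : MemLp V 2 ℙ := by
    have h := (hS2mem.sub (hW2mem.const_mul (1/(n:ℝ)))).const_mul (1/((n:ℝ)-1))
    have e : V = fun ω =>
        (1/((n:ℝ)-1)) * ((∑ i, (Z i ω)^2) - (1/(n:ℝ)) * (∑ i, Z i ω)^2) := by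
      funext ω; rw [hVdef]; field_simp
    rwa [e]
  -- mean of V
  have hEV : ∫ ω, V ω ∂ℙ = σsq := by
    have e : V = fun ω =>
        (1/((n:ℝ)-1)) * ((∑ i, (Z i ω)^2) + (-(1/(n:ℝ))) * (∑ i, Z i ω)^2) := by
      funext ω; rw [hVdef]; field_simp; ring
    rw [e]
    rw [integral_const_mul]
    rw [sv_add2 intS2 (intW2.const_mul _), integral_const_mul, Q5, Q2]
    field_simp
    ring
  -- second moment of V
  have hEV2 : ∫ ω, (V ω)^2 ∂ℙ
      = (1/((n:ℝ)-1))^2 * ((n*(κtilde*σsq^2) + n*(n-1)*σsq^2)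
        + ((-(2/(n:ℝ)))*(n*(κtilde*σsq^2) + n*(n-1)*σsq^2)
        + (1/(n:ℝ)^2)*(n*(κtilde*σsq^2) + 3*n*(n-1)*σsq^2))) := by
    have e : (fun ω => (V ω)^2) = fun ω =>
        (1/((n:ℝ)-1))^2 * ((∑ i, (Z i ω)^2)^2
          + ((-(2/(n:ℝ)))*((∑ i, (Z i ω)^2) * (∑ i, Z i ω)^2)
          + (1/(n:ℝ)^2)*(∑ i, Z i ω)^4)) := by
      funext ω; rw [hVdef]; field_simp; ring
    rw [e, integral_const_mul,
      sv_add3 intS2sq (intS2W2.const_mul _) (intW4.const_mul _),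
      integral_const_mul, integral_const_mul, Q8, Q7, Q4]
  have hvarV : variance V ℙ = σsq^2 * (κtilde - ((n:ℝ)-3)/((n:ℝ)-1)) / n := by
    have hd := variance_eq_sub hVmem
    have hd2 : variance V ℙ = (∫ ω, (V ω)^2 ∂ℙ) - (∫ ω, V ω ∂ℙ)^2 := hd
    rw [hd2, hEV, hEV2]
    field_simp
    ring
  -- Cantelli
  set c := κtilde - ((n:ℝ) - 3)/((n:ℝ) - 1) with hcdef
  set s := Real.sqrt (c * ((1 - α) / (α * n))) with hsdef
  have hfrac : 0 < (1 - α) / (α * n) :=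
    div_pos (by linarith) (by positivity)
  have hspos : 0 < s := Real.sqrt_pos.mpr (mul_pos hc hfrac)
  set t := σsq * s with htdef
  have ht : 0 < t := by positivity
  have hs2 : s^2 = c * ((1 - α) / (α * n)) := Real.sq_sqrt (mul_pos hc hfrac).le
  have hcant := sv_cantelli hVmem ht
  have hratio : variance V ℙ / (variance V ℙ + t^2) = α := by
    rw [hvarV, htdef, mul_pow, hs2]
    rw [div_eq_iff]
    · field_simp
      ring
    · have h1 : 0 < σsq^2 * c / n := by positivity
      have h2 : 0 < σsq^2 * (c * ((1-α)/(α*n))) := by positivity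
      nlinarith [h1, h2, sq_nonneg s]
  rw [hratio, hEV] at hcant
  -- identify the event
  have hVmeas : Measurable V := by
    apply Measurable.const_mul
    exact ((Finset.measurable_sum Finset.univ (fun j _ => (hZmeas j).pow_const 2)).sub
      (((Finset.measurable_sum Finset.univ (fun j _ => hZmeas j)).pow_const 2).div_const _))
  have hAmeas : MeasurableSet {ω | σsq + t ≤ V ω} :=
    measurableSet_le measurable_const hVmeas
  -- pointwise identity: sample variance with Y' equals V
  have hpt : ∀ ω, (1/((n:ℝ)-1)) * ∑ i, (Y' i ω - (1/(n:ℝ)) * ∑ j, Y' j ω)^2 = V ω := by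
    intro ω
    have hsumZ : ∑ j, Z j ω = (∑ j, Y' j ω) - n * μ0 := by
      rw [hZdef]
      rw [Finset.sum_sub_distrib, Finset.sum_const, Finset.card_univ, Fintype.card_fin,
        nsmul_eq_mul]
    have hterm : ∀ i, Y' i ω - (1/(n:ℝ)) * ∑ j, Y' j ω
        = Z i ω - (1/(n:ℝ)) * ∑ j, Z j ω := by
      intro i
      rw [hsumZ, hZdef]
      field_simp
      ring
    rw [Finset.sum_congr rfl (fun i _ => by rw [hterm i])]
    have e : ∀ i : Fin n, (Z i ω - (1/(n:ℝ)) * ∑ j, Z j ω)^2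
        = (Z i ω)^2 - ((2/(n:ℝ)) * ∑ j, Z j ω) * Z i ω
            + ((1/(n:ℝ)) * ∑ j, Z j ω)^2 := fun i => by ring
    rw [Finset.sum_congr rfl (fun i _ => e i)]
    rw [Finset.sum_add_distrib, Finset.sum_sub_distrib, ← Finset.mul_sum,
      Finset.sum_const, Finset.card_univ, Fintype.card_fin, nsmul_eq_mul, hVdef]
    field_simp
    ring
  -- event with Y equals event with Y' up to null sets
  have haeY : ∀ᵐ ω ∂ℙ, ∀ i, Y i ω = Y' i ω := ae_all_iff.mpr haeeq
  set B := σsq * (1 + s) with hBdef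
  have hBt : B = σsq + t := by rw [hBdef, htdef]; ring
  have hev : {ω | (1/((n:ℝ)-1)) * ∑ i, (Y i ω - (1/(n:ℝ)) * ∑ j, Y j ω)^2 < B}
      =ᵐ[ℙ] {ω | V ω < B} := by
    filter_upwards [haeY] with ω hω
    show ((1/((n:ℝ)-1)) * ∑ i, (Y i ω - (1/(n:ℝ)) * ∑ j, Y j ω)^2 < B) = (V ω < B)
    rw [Finset.sum_congr rfl (fun i _ => by rw [hω i,
      Finset.sum_congr rfl (fun j _ => hω j)]), hpt ω]
  calc ENNReal.ofReal (1 - α) = 1 - ENNReal.ofReal α := by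
        rw [← ENNReal.ofReal_one, ← ENNReal.ofReal_sub _ hα0.le]
    _ ≤ 1 - ℙ {ω | σsq + t ≤ V ω} := tsub_le_tsub_left hcant 1
    _ = ℙ {ω | σsq + t ≤ V ω}ᶜ := (prob_compl_eq_one_sub hAmeas).symm
    _ = ℙ {ω | V ω < B} := by
        congr 1
        ext ω
        simp [Set.mem_compl_iff, not_le, hBt]
    _ = ℙ {ω | (1/((n:ℝ)-1)) * ∑ i, (Y i ω - (1/(n:ℝ)) * ∑ j, Y j ω)^2 < B} :=
        (measure_congr hev).symm
    _ = _ := rfl
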